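/- For every μ with 0 < μ < 1 there exists n0 such that for all n ≥ n0, every strongly edge-colored graph G on n vertices contains a spanning subgraph G′ in which every color class has at most μn edges and d_{G′}(v) ≥ d_G(v) − μ²n for every vertex v of G. -/

import Mathlib

open SimpleGraph

def StronglyEdgeColored {V C : Type*} (G : SimpleGraph V) (c : Sym2 V → C) : Prop :=
  ∀ a b x y : V, G.Adj a b → G.Adj x y → c s(a, b) = c s(x, y) →
    s(a, b) = s(x, y) ∨
      (a ≠ x ∧ a ≠ y ∧ b ≠ x ∧ b ≠ y ∧
        ¬G.Adj a x ∧ ¬G.Adj a y ∧ ¬G.Adj b x ∧ ¬G.Adj b y)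

namespace Stmt3Aux

open Finset

lemma sym2_out {V : Type*} (e : Sym2 V) : s(e.out.1, e.out.2) = e := by
  rw [Sym2.mk]; exact e.out_eq

section

variable {V C : Type} [Fintype V] (G : SimpleGraph V) (c : Sym2 V → C) (B : Finset C)

/-- Two edges sharing endpoint `a` with the same color are equal. -/
lemma sec_eq (hc : StronglyEdgeColored G c) {a b b' : V} (h : G.Adj a b) (h' : G.Adj a b')
    (hcol : c s(a, b) = c s(a, b')) : b = b' := by
  rcases hc a b a b' h h' hcol with heq | ⟨ha, _⟩
  · rw [Sym2.eq_iff] at heq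
    rcases heq with ⟨-, hb⟩ | ⟨hab', hba⟩
    · exact hb
    · exact absurd (hab' ▸ h') (by simp)
  · exact absurd rfl ha

abbrev W := V ⊕ V ⊕ {x // x ∈ B}

def auxRel : W (V := V) B → W (V := V) B → Prop
  | Sum.inl a, Sum.inr (Sum.inl b) => G.Adj a b ∧ c s(a, b) ∈ B
  | Sum.inl a, Sum.inr (Sum.inr i) => ∃ b, G.Adj a b ∧ c s(a, b) = i.1
  | Sum.inr (Sum.inl b), Sum.inr (Sum.inr i) => ∃ a, G.Adj b a ∧ c s(b, a) = i.1
  | _, _ => False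

def H : SimpleGraph (W (V := V) B) := SimpleGraph.fromRel (auxRel G c B)

lemma adj_ab {a b : V} :
    (H G c B).Adj (Sum.inl a) (Sum.inr (Sum.inl b)) ↔ G.Adj a b ∧ c s(a, b) ∈ B := by
  simp [H, auxRel, fromRel_adj]

lemma adj_ai {a : V} {i : {x // x ∈ B}} :
    (H G c B).Adj (Sum.inl a) (Sum.inr (Sum.inr i)) ↔ ∃ b, G.Adj a b ∧ c s(a, b) = i.1 := by
  simp [H, auxRel, fromRel_adj]

lemma adj_bi {b : V} {i : {x // x ∈ B}} :
    (H G c B).Adj (Sum.inr (Sum.inl b)) (Sum.inr (Sum.inr i)) ↔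
      ∃ a, G.Adj b a ∧ c s(b, a) = i.1 := by
  simp [H, auxRel, fromRel_adj]

lemma not_adj_aa {a b : V} : ¬ (H G c B).Adj (Sum.inl a) (Sum.inl b) := by
  simp [H, auxRel, fromRel_adj]

lemma not_adj_bb {a b : V} : ¬ (H G c B).Adj (Sum.inr (Sum.inl a)) (Sum.inr (Sum.inl b)) := by
  simp [H, auxRel, fromRel_adj]

lemma not_adj_ii {i j : {x // x ∈ B}} :
    ¬ (H G c B).Adj (Sum.inr (Sum.inr i)) (Sum.inr (Sum.inr j)) := by
  simp [H, auxRel, fromRel_adj]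

/-- The core inducedness argument: in a triangle `a, b, i`, the color of `ab` is `i`. -/
lemma triangle_core (hc : StronglyEdgeColored G c) {a b : V} {i : {x // x ∈ B}}
    (h1 : (H G c B).Adj (Sum.inl a) (Sum.inr (Sum.inl b)))
    (h2 : (H G c B).Adj (Sum.inl a) (Sum.inr (Sum.inr i)))
    (h3 : (H G c B).Adj (Sum.inr (Sum.inl b)) (Sum.inr (Sum.inr i))) :
    G.Adj a b ∧ c s(a, b) = i.1 := by
  rw [adj_ab] at h1
  rw [adj_ai] at h2
  rw [adj_bi] at h3
  obtain ⟨b', hb', hcb'⟩ := h2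
  obtain ⟨a', ha', hca'⟩ := h3
  refine ⟨h1.1, ?_⟩
  rcases hc a b' b a' hb' ha' (hcb'.trans hca'.symm) with heq | ⟨_, _, _, _, hnab, -⟩
  · rw [Sym2.eq_iff] at heq
    rcases heq with ⟨hab, hb'a'⟩ | ⟨ha, hb⟩
    · exact absurd hab (G.ne_of_adj h1.1)
    · rw [hb] at hcb'; exact hcb'
  · exact absurd h1.1 hnab

variable [DecidableEq V] [DecidableEq C] [DecidableRel G.Adj]

/-- Every triangle of `H` has the canonical shape. -/
lemma triangle_shape (hc : StronglyEdgeColored G c) {t : Finset (W (V := V) B)}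
    (ht : (H G c B).IsNClique 3 t) :
    ∃ (a b : V) (h : G.Adj a b) (hb : c s(a, b) ∈ B),
      t = {Sum.inl a, Sum.inr (Sum.inl b), Sum.inr (Sum.inr ⟨c s(a, b), hb⟩)} := by
  obtain ⟨x, y, z, hxy, hxz, hyz, rfl⟩ := is3Clique_iff.1 ht
  have key : ∀ (a b : V) (i : {x // x ∈ B}),
      (H G c B).Adj (Sum.inl a) (Sum.inr (Sum.inl b)) →
      (H G c B).Adj (Sum.inl a) (Sum.inr (Sum.inr i)) →
      (H G c B).Adj (Sum.inr (Sum.inl b)) (Sum.inr (Sum.inr i)) →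
      ∃ (a' b' : V) (h : G.Adj a' b') (hb : c s(a', b') ∈ B),
        ({Sum.inl a, Sum.inr (Sum.inl b), Sum.inr (Sum.inr i)} : Finset (W (V := V) B)) =
          {Sum.inl a', Sum.inr (Sum.inl b'), Sum.inr (Sum.inr ⟨c s(a', b'), hb⟩)} := by
    intro a b i h1 h2 h3
    obtain ⟨hab, hcol⟩ := triangle_core G c B hc h1 h2 h3
    have hbB : c s(a, b) ∈ B := ((adj_ab G c B).1 h1).2
    refine ⟨a, b, hab, hbB, ?_⟩
    have : i = ⟨c s(a, b), hbB⟩ := Subtype.ext hcol.symm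
    rw [this]
  rcases x with a | b | i <;> rcases y with a' | b' | i' <;> rcases z with a'' | b'' | i'' <;>
    first
      | exact absurd hxy (not_adj_aa G c B) | exact absurd hxy (not_adj_bb G c B)
      | exact absurd hxy (not_adj_ii G c B)
      | exact absurd hxz (not_adj_aa G c B) | exact absurd hxz (not_adj_bb G c B)
      | exact absurd hxz (not_adj_ii G c B)
      | exact absurd hyz (not_adj_aa G c B) | exact absurd hyz (not_adj_bb G c B)
      | exact absurd hyz (not_adj_ii G c B)
      | skip
  · exact key a b' i'' hxy hxz hyz
  · obtain ⟨p, q, h, hb, hs⟩ := key a b'' i' hxz hxy hyz.symm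
    exact ⟨p, q, h, hb, by rw [← hs]; ext w; simp only [Finset.mem_insert,
      Finset.mem_singleton]; tauto⟩
  · obtain ⟨p, q, h, hb, hs⟩ := key a' b i'' hxy.symm hyz hxz
    exact ⟨p, q, h, hb, by rw [← hs]; ext w; simp only [Finset.mem_insert,
      Finset.mem_singleton]; tauto⟩
  · obtain ⟨p, q, h, hb, hs⟩ := key a'' b i' hxz.symm hyz.symm hxy
    exact ⟨p, q, h, hb, by rw [← hs]; ext w; simp only [Finset.mem_insert,
      Finset.mem_singleton]; tauto⟩
  · obtain ⟨p, q, h, hb, hs⟩ := key a' b'' i hyz hxy.symm hxz.symm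
    exact ⟨p, q, h, hb, by rw [← hs]; ext w; simp only [Finset.mem_insert,
      Finset.mem_singleton]; tauto⟩
  · obtain ⟨p, q, h, hb, hs⟩ := key a'' b' i hyz.symm hxz.symm hxy.symm
    exact ⟨p, q, h, hb, by rw [← hs]; ext w; simp only [Finset.mem_insert,
      Finset.mem_singleton]; tauto⟩

noncomputable def tri (e : Sym2 V) : Finset (W (V := V) B) :=
  if h : c e ∈ B then
    {Sum.inl e.out.1, Sum.inr (Sum.inl e.out.2), Sum.inr (Sum.inr ⟨c e, h⟩)}
  else ∅

lemma tri_eq {e : Sym2 V} (h : c e ∈ B) :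
    tri c B e =
      {Sum.inl e.out.1, Sum.inr (Sum.inl e.out.2), Sum.inr (Sum.inr ⟨c e, h⟩)} :=
  dif_pos h

lemma adj_of_mem (e : Sym2 V) (he : e ∈ G.edgeSet) : G.Adj e.out.1 e.out.2 := by
  rw [← mem_edgeSet, sym2_out]; exact he

lemma tri_isClique {e : Sym2 V} (he : e ∈ G.edgeSet) (h : c e ∈ B) :
    (H G c B).IsNClique 3 (tri c B e) := by
  have hadj := adj_of_mem G e he
  rw [tri_eq c B h, is3Clique_triple_iff]
  refine ⟨(adj_ab G c B).2 ⟨hadj, by rwa [sym2_out]⟩,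
    (adj_ai G c B).2 ⟨e.out.2, hadj, by rw [sym2_out]⟩,
    (adj_bi G c B).2 ⟨e.out.1, hadj.symm, ?_⟩⟩
  rw [Sym2.eq_swap, sym2_out]

lemma tri_injOn {e₁ e₂ : Sym2 V} (h₁ : c e₁ ∈ B) (h₂ : c e₂ ∈ B)
    (h : tri c B e₁ = tri c B e₂) : e₁ = e₂ := by
  have m1 : (Sum.inl e₁.out.1 : W (V := V) B) ∈ tri c B e₂ := by
    rw [← h, tri_eq c B h₁]; simp
  have m2 : (Sum.inr (Sum.inl e₁.out.2) : W (V := V) B) ∈ tri c B e₂ := by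
    rw [← h, tri_eq c B h₁]; simp
  rw [tri_eq c B h₂] at m1 m2
  simp only [Finset.mem_insert, Finset.mem_singleton] at m1 m2
  rcases m1 with m1 | m1 | m1
  rotate_left
  · exact absurd m1 (by simp)
  · exact absurd m1 (by simp)
  rcases m2 with m2 | m2 | m2
  · exact absurd m2 (by simp)
  rotate_left
  · exact absurd m2 (by simp)
  rw [Sum.inl.injEq] at m1
  rw [Sum.inr.injEq, Sum.inl.injEq] at m2
  rw [← sym2_out e₁, ← sym2_out e₂, m1, m2]

lemma tri_inter (hc : StronglyEdgeColored G c) {e₁ e₂ : Sym2 V}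
    (he₁ : e₁ ∈ G.edgeSet) (he₂ : e₂ ∈ G.edgeSet) (h₁ : c e₁ ∈ B) (h₂ : c e₂ ∈ B)
    (hne : e₁ ≠ e₂) : ((tri c B e₁ : Set (W (V := V) B)) ∩ ↑(tri c B e₂)).Subsingleton := by
  have adj₁ := adj_of_mem G e₁ he₁
  have adj₂ := adj_of_mem G e₂ he₂
  have C12 : e₁.out.1 = e₂.out.1 → e₁.out.2 = e₂.out.2 → e₁ = e₂ := fun p q => by
    rw [← sym2_out e₁, ← sym2_out e₂, p, q]
  have C13 : e₁.out.1 = e₂.out.1 → c e₁ = c e₂ → e₁ = e₂ := by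
    intro p q
    refine C12 p (sec_eq G c hc adj₁ (p ▸ adj₂) ?_)
    rw [sym2_out]
    rw [show s(e₁.out.1, e₂.out.2) = e₂ by rw [p, sym2_out]]
    exact q
  have C23 : e₁.out.2 = e₂.out.2 → c e₁ = c e₂ → e₁ = e₂ := by
    intro p q
    refine C12 (sec_eq G c hc adj₁.symm (p ▸ adj₂.symm) ?_) p
    rw [Sym2.eq_swap, sym2_out]
    rw [show s(e₁.out.2, e₂.out.1) = e₂ by rw [p, Sym2.eq_swap, sym2_out]]
    exact q
  have feat : ∀ w : W (V := V) B, w ∈ (tri c B e₁ : Set (W (V := V) B)) ∩ ↑(tri c B e₂) →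
      (w = Sum.inl e₁.out.1 ∧ e₁.out.1 = e₂.out.1) ∨
      (w = Sum.inr (Sum.inl e₁.out.2) ∧ e₁.out.2 = e₂.out.2) ∨
      (w = Sum.inr (Sum.inr ⟨c e₁, h₁⟩) ∧ c e₁ = c e₂) := by
    intro w hw
    rw [Set.mem_inter_iff] at hw
    obtain ⟨hw1, hw2⟩ := hw
    rw [Finset.mem_coe, tri_eq c B h₁] at hw1
    rw [Finset.mem_coe, tri_eq c B h₂] at hw2
    simp only [Finset.mem_insert, Finset.mem_singleton] at hw1 hw2
    rcases hw1 with hw1 | hw1 | hw1 <;> rcases hw2 with hw2 | hw2 | hw2 <;>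
        rw [hw1] at hw2 <;> simp at hw2 <;> tauto
  intro x hx y hy
  rcases feat x hx with ⟨px, fx⟩ | ⟨px, fx⟩ | ⟨px, fx⟩ <;>
    rcases feat y hy with ⟨py, fy⟩ | ⟨py, fy⟩ | ⟨py, fy⟩ <;>
    first
      | (exact absurd (C12 fx fy) hne)
      | (exact absurd (C12 fy fx) hne)
      | (exact absurd (C13 fx fy) hne)
      | (exact absurd (C13 fy fx) hne)
      | (exact absurd (C23 fx fy) hne)
      | (exact absurd (C23 fy fx) hne)
      | (rw [px, py])

lemma clique_card_le (hc : StronglyEdgeColored G c)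
    [DecidableRel (H G c B).Adj] :
    #((H G c B).cliqueFinset 3) ≤ Fintype.card V ^ 2 := by
  classical
  have hsub : (H G c B).cliqueFinset 3 ⊆
      (Finset.univ : Finset (V × V)).image (fun p => if h : c s(p.1, p.2) ∈ B then
        ({Sum.inl p.1, Sum.inr (Sum.inl p.2), Sum.inr (Sum.inr ⟨c s(p.1, p.2), h⟩)} :
          Finset (W (V := V) B)) else ∅) := by
    intro t ht
    rw [mem_cliqueFinset_iff] at ht
    obtain ⟨a, b, h, hb, rfl⟩ := triangle_shape G c B hc ht
    exact Finset.mem_image.2 ⟨(a, b), Finset.mem_univ _, by rw [dif_pos hb]⟩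
  calc #((H G c B).cliqueFinset 3) ≤ _ := Finset.card_le_card hsub
    _ ≤ #(Finset.univ : Finset (V × V)) := Finset.card_image_le
    _ = Fintype.card V ^ 2 := by simp [sq]

end

end Stmt3Aux

open Finset in
set_option maxHeartbeats 2000000 in

theorem stmt_3 (μ : ℝ) (hμ0 : 0 < μ) (hμ1 : μ < 1) :
    ∃ n0 : ℕ, ∀ (V C : Type) [Fintype V] (G : SimpleGraph V) (c : Sym2 V → C),
      n0 ≤ Fintype.card V → StronglyEdgeColored G c →
      ∃ G' : SimpleGraph V, G' ≤ G ∧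
        (∀ col : C, ({e ∈ G'.edgeSet | c e = col}.ncard : ℝ) ≤ μ * Fintype.card V) ∧
        (∀ v : V, ((G.neighborSet v).ncard : ℝ) - μ ^ 2 * Fintype.card V ≤
          ((G'.neighborSet v).ncard : ℝ)) := by
  classical
  set ε : ℝ := μ ^ 5 / 9 with hεdef
  have hε0 : 0 < ε := by positivity
  have hε1 : ε ≤ 1 := by nlinarith [pow_lt_one₀ hμ0.le hμ1 (n := 5) (by norm_num)]
  have hP : 0 < SimpleGraph.triangleRemovalBound ε := triangleRemovalBound_pos hε0
  refine ⟨⌈(SimpleGraph.triangleRemovalBound ε)⁻¹⌉₊ + 1, ?_⟩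
  intro V C _ G c hn hc
  classical
  set n : ℕ := Fintype.card V with hndef
  have hn1 : 1 ≤ n := le_trans (Nat.le_add_left 1 _) hn
  set cls : C → Finset (Sym2 V) := fun col => G.edgeFinset.filter (fun e => c e = col)
    with hclsdef
  set bigF : Finset C := (G.edgeFinset.image c).filter (fun col => μ * n < #(cls col))
    with hbigFdef
  -- Step 1: the number of big color classes is at most μ² n.
  have hm : (#bigF : ℝ) ≤ μ ^ 2 * n := by
    by_contra hm
    push_neg at hm
    set bigE : Finset (Sym2 V) := G.edgeFinset.filter (fun e => c e ∈ bigF) with hbigEdef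
    have hbigE_eq : bigE = bigF.biUnion cls := by
      ext e
      simp only [hbigEdef, hclsdef, Finset.mem_filter, Finset.mem_biUnion]
      constructor
      · rintro ⟨he, hb⟩; exact ⟨c e, hb, he, rfl⟩
      · rintro ⟨col, hcol, he, rfl⟩; exact ⟨he, hcol⟩
    have hdisj : ∀ col₁ ∈ bigF, ∀ col₂ ∈ bigF, col₁ ≠ col₂ → Disjoint (cls col₁) (cls col₂) := by
      intro col₁ _ col₂ _ hne
      rw [Finset.disjoint_left]
      intro e he₁ he₂
      rw [hclsdef] at he₁ he₂
      simp only [Finset.mem_filter] at he₁ he₂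
      exact hne (he₁.2 ▸ he₂.2 ▸ rfl)
    have hcard_biUnion : #bigE = ∑ col ∈ bigF, #(cls col) := by
      rw [hbigE_eq]; exact Finset.card_biUnion hdisj
    have hlow : (#bigF : ℝ) * (μ * n) ≤ (#bigE : ℝ) := by
      have : (#bigF) • (μ * (n : ℝ)) ≤ ∑ col ∈ bigF, (#(cls col) : ℝ) := by
        apply Finset.card_nsmul_le_sum
        intro col hcol
        rw [hbigFdef] at hcol
        exact (le_of_lt (Finset.mem_filter.1 hcol).2)
      rw [nsmul_eq_mul] at this
      refine this.trans ?_
      rw [hcard_biUnion]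
      push_cast
      exact le_refl _
    -- the family of triangles in the auxiliary graph
    set tris : Finset (Finset (Stmt3Aux.W (V := V) bigF)) :=
      bigE.image (Stmt3Aux.tri c bigF) with htrisdef
    have hmemE : ∀ e ∈ bigE, e ∈ G.edgeSet ∧ c e ∈ bigF := by
      intro e he
      rw [hbigEdef] at he
      simp only [Finset.mem_filter, mem_edgeFinset] at he
      exact he
    have htris_sub : tris ⊆ (Stmt3Aux.H G c bigF).cliqueFinset 3 := by
      intro t ht
      rw [htrisdef] at ht
      obtain ⟨e, he, rfl⟩ := Finset.mem_image.1 ht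
      obtain ⟨he1, he2⟩ := hmemE e he
      exact mem_cliqueFinset_iff.2 (Stmt3Aux.tri_isClique G c bigF he1 he2)
    have hpd : (tris : Set (Finset (Stmt3Aux.W (V := V) bigF))).Pairwise
        fun x y => ((x : Set (Stmt3Aux.W (V := V) bigF)) ∩
          (y : Set (Stmt3Aux.W (V := V) bigF))).Subsingleton := by
      intro t₁ ht₁ t₂ ht₂ hne
      rw [Finset.mem_coe, htrisdef] at ht₁ ht₂
      obtain ⟨e₁, he₁, rfl⟩ := Finset.mem_image.1 ht₁
      obtain ⟨e₂, he₂, rfl⟩ := Finset.mem_image.1 ht₂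
      obtain ⟨he₁1, he₁2⟩ := hmemE e₁ he₁
      obtain ⟨he₂1, he₂2⟩ := hmemE e₂ he₂
      have hee : e₁ ≠ e₂ := fun h => hne (h ▸ rfl)
      exact Stmt3Aux.tri_inter G c bigF hc he₁1 he₂1 he₁2 he₂2 hee
    have htris_card : #tris = #bigE := by
      rw [htrisdef]
      apply Finset.card_image_of_injOn
      intro e₁ he₁ e₂ he₂ h
      exact Stmt3Aux.tri_injOn c bigF (hmemE e₁ he₁).2 (hmemE e₂ he₂).2 h
    set N : ℕ := Fintype.card (Stmt3Aux.W (V := V) bigF) with hNdef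
    have hNcard : N = n + (n + #bigF) := by
      rw [hNdef]
      simp [Stmt3Aux.W, Fintype.card_sum, Fintype.card_coe, hndef]
    have hclq_le : #((Stmt3Aux.H G c bigF).cliqueFinset 3) ≤ n ^ 2 :=
      Stmt3Aux.clique_card_le G c bigF hc
    have hE_le : (#bigE : ℝ) ≤ (n : ℝ) ^ 2 := by
      have h1 : #bigE ≤ n ^ 2 := by
        rw [← htris_card]
        exact le_trans (Finset.card_le_card htris_sub) hclq_le
      exact_mod_cast h1
    have hn0 : (0 : ℝ) < n := by exact_mod_cast hn1
    have hμb : μ * (#bigF : ℝ) ≤ n := by nlinarith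
    have hNr : (N : ℝ) = 2 * n + #bigF := by rw [hNcard]; push_cast; ring
    have hA : μ * (N : ℝ) ≤ 3 * n := by
      rw [hNr]
      nlinarith
    have hNge : (n : ℝ) ≤ (N : ℝ) := by
      rw [hNr]
      have : (0 : ℝ) ≤ (#bigF : ℝ) := Nat.cast_nonneg _
      linarith
    have hN0 : (0 : ℝ) ≤ (N : ℝ) := by positivity
    have s1 : μ ^ 2 * (N : ℝ) ^ 2 ≤ 9 * (n : ℝ) ^ 2 := by
      nlinarith [mul_le_mul hA hA (by positivity : (0:ℝ) ≤ μ * N) (by positivity : (0:ℝ) ≤ 3 * n)]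
    have s2 : ε * (N : ℝ) ^ 2 ≤ μ ^ 3 * (n : ℝ) ^ 2 := by
      rw [hεdef]
      nlinarith [mul_le_mul_of_nonneg_left s1 (le_of_lt (pow_pos hμ0 3))]
    have s3 : μ ^ 3 * (n : ℝ) ^ 2 ≤ (#bigE : ℝ) := by
      nlinarith [mul_le_mul_of_nonneg_right hm.le (by positivity : (0:ℝ) ≤ μ * n), hlow]
    have hbig : ε * ((Fintype.card (Stmt3Aux.W (V := V) bigF)) ^ 2 : ℕ) ≤ (#tris : ℝ) := by
      rw [htris_card]
      push_cast
      calc ε * ((N : ℝ)) ^ 2 ≤ μ ^ 3 * (n : ℝ) ^ 2 := s2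
        _ ≤ _ := s3
    have hfar : (Stmt3Aux.H G c bigF).FarFromTriangleFree ε :=
      farFromTriangleFree_of_disjoint_triangles tris htris_sub hpd hbig
    have hrem := hfar.le_card_cliqueFinset
    -- final numeric contradiction
    have hPn : 1 < SimpleGraph.triangleRemovalBound ε * n := by
      have h1 : ((SimpleGraph.triangleRemovalBound ε)⁻¹ : ℝ) < n := by
        calc ((SimpleGraph.triangleRemovalBound ε)⁻¹ : ℝ)
            ≤ (⌈(SimpleGraph.triangleRemovalBound ε)⁻¹⌉₊ : ℝ) := Nat.le_ceil _
          _ < (⌈(SimpleGraph.triangleRemovalBound ε)⁻¹⌉₊ + 1 : ℕ) := by push_cast; linarith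
          _ ≤ (n : ℝ) := by exact_mod_cast hn
      rw [inv_lt_iff_one_lt_mul₀ hP] at h1
      nlinarith [h1]
    have hcl2 : (#((Stmt3Aux.H G c bigF).cliqueFinset 3) : ℝ) ≤ (n : ℝ) ^ 2 := by
      exact_mod_cast hclq_le
    have hrem2 : SimpleGraph.triangleRemovalBound ε * (N : ℝ) ^ 3 ≤ (n : ℝ) ^ 2 := by
      refine le_trans ?_ hcl2
      have := hrem
      rw [← hNdef] at this
      push_cast at this ⊢
      exact this
    have hNpos : (0 : ℝ) < (N : ℝ) := lt_of_lt_of_le hn0 hNge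
    have hN2pos : (0 : ℝ) < (N : ℝ) ^ 2 := by positivity
    set P : ℝ := SimpleGraph.triangleRemovalBound ε with hPdef
    have t1 : (N : ℝ) ^ 2 < P * n * (N : ℝ) ^ 2 := by nlinarith [hPn, hN2pos]
    have t2 : P * n * (N : ℝ) ^ 2 ≤ P * (N : ℝ) ^ 3 := by
      nlinarith [mul_le_mul_of_nonneg_left hNge (by positivity : (0:ℝ) ≤ P * (N : ℝ) ^ 2)]
    have t3 : (n : ℝ) ^ 2 ≤ (N : ℝ) ^ 2 := by nlinarith [hNge, hn0]
    linarith [hrem2, t1, t2, t3]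
  -- Step 2: construct G' by deleting all edges of big color classes.
  refine ⟨G.deleteEdges {e | c e ∈ bigF}, SimpleGraph.deleteEdges_le _, ?_, ?_⟩
  · intro col
    by_cases hcol : col ∈ bigF
    · have hempty : {e ∈ (G.deleteEdges {e | c e ∈ bigF}).edgeSet | c e = col} = ∅ := by
        ext e
        simp only [Set.mem_setOf_eq, Set.mem_empty_iff_false, iff_false, not_and,
          edgeSet_deleteEdges, Set.mem_diff]
        rintro ⟨-, hnb⟩ hce
        exact absurd (show e ∈ {e | c e ∈ bigF} from by rw [Set.mem_setOf_eq, hce]; exact hcol)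
          hnb
      rw [hempty]
      simp only [Set.ncard_empty, Nat.cast_zero]
      positivity
    · have hsub : {e ∈ (G.deleteEdges {e | c e ∈ bigF}).edgeSet | c e = col} ⊆ ↑(cls col) := by
        rintro e ⟨he, hce⟩
        rw [edgeSet_deleteEdges] at he
        simp only [hclsdef, Finset.coe_filter, Set.mem_setOf_eq, mem_edgeFinset]
        exact ⟨he.1, hce⟩
      have h1 : {e ∈ (G.deleteEdges {e | c e ∈ bigF}).edgeSet | c e = col}.ncard ≤ #(cls col) := by
        rw [← Set.ncard_coe_finset]
        exact Set.ncard_le_ncard hsub (Finset.finite_toSet _)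
      have h2 : (#(cls col) : ℝ) ≤ μ * n := by
        by_contra hb
        push_neg at hb
        apply hcol
        rw [hbigFdef]
        rw [Finset.mem_filter]
        constructor
        · have hpos : 0 < #(cls col) := by
            by_contra hz
            push_neg at hz
            interval_cases h : #(cls col) <;> simp_all <;> nlinarith [hn1]
          obtain ⟨e, he⟩ := Finset.card_pos.1 hpos
          rw [hclsdef] at he
          simp only [Finset.mem_filter] at he
          exact Finset.mem_image.2 ⟨e, he.1, he.2⟩
        · exact hb
      calc ({e ∈ (G.deleteEdges {e | c e ∈ bigF}).edgeSet | c e = col}.ncard : ℝ)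
          ≤ (#(cls col) : ℝ) := by exact_mod_cast h1
        _ ≤ μ * n := h2
  · intro v
    set R : Set V := {b | G.Adj v b ∧ c s(v, b) ∈ bigF} with hRdef
    have hsub : G.neighborSet v ⊆ (G.deleteEdges {e | c e ∈ bigF}).neighborSet v ∪ R := by
      intro b hb
      by_cases hbad : c s(v, b) ∈ bigF
      · exact Or.inr ⟨hb, hbad⟩
      · left
        rw [mem_neighborSet, deleteEdges_adj]
        exact ⟨hb, hbad⟩
    have h1 : (G.neighborSet v).ncard ≤
        ((G.deleteEdges {e | c e ∈ bigF}).neighborSet v).ncard + R.ncard :=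
      le_trans (Set.ncard_le_ncard hsub (Set.toFinite _)) (Set.ncard_union_le _ _)
    have h2 : R.ncard ≤ #bigF := by
      have hinj : Set.InjOn (fun b => c s(v, b)) R := by
        intro b hb b' hb' heq
        exact Stmt3Aux.sec_eq G c hc hb.1 hb'.1 heq
      have himg : (fun b => c s(v, b)) '' R ⊆ ↑bigF := by
        rintro x ⟨b, hb, rfl⟩
        exact hb.2
      calc R.ncard = ((fun b => c s(v, b)) '' R).ncard := (Set.ncard_image_of_injOn hinj).symm
        _ ≤ (↑bigF : Set C).ncard := Set.ncard_le_ncard himg (Finset.finite_toSet _)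
        _ = #bigF := Set.ncard_coe_finset _
    have h1' : ((G.neighborSet v).ncard : ℝ) ≤
        (((G.deleteEdges {e | c e ∈ bigF}).neighborSet v).ncard : ℝ) + (#bigF : ℝ) := by
      have := le_trans h1 (by exact Nat.add_le_add_left h2 _)
      exact_mod_cast this
    linarith
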